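/- Let k be a positive integer and n ∈ {1,…,2^{k−1}}. For every x with (n−1)/2^{k−1} ≤ x ≤ n/2^{k−1}, writing θ = 2^k x − 2n + 1, the first integral of the degree-one Chebyshev wavelet satisfies ∫₀^x φ_{n1}(τ) dτ = γ_1 2^{−(k−1)/2 − 3} [ T_2(θ) − T_0(θ) ]; moreover for every x with n/2^{k−1} ≤ x ≤ 1 one has ∫₀^x φ_{n1}(τ) dτ = 0. -/

import Mathlib

open Real intervalIntegral

/-- Normalizing constant of the Chebyshev wavelets: `γ 0 = √(2/π)`, `γ m = 2/√π` for `m ≥ 1`. -/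
noncomputable def chebGamma (m : ℕ) : ℝ :=
  if m = 0 then Real.sqrt (2 / Real.pi) else 2 / Real.sqrt Real.pi

/-- **First integral of the degree-one Chebyshev wavelet (Eq. (2.13)).**
On the support interval, with `θ = 2^k x − 2n + 1`,
`∫₀^x φ_{n1}(τ) dτ = γ_1 2^{−(k−1)/2−3} [T_2(θ) − T_0(θ)]`, and for
`n/2^{k−1} ≤ x ≤ 1` one has `∫₀^x φ_{n1}(τ) dτ = 0`. -/
theorem chebyshev_wavelet_first_integral_deg_one
    (k n : ℕ) (hk : 0 < k) (hn1 : 1 ≤ n) (hn2 : n ≤ 2 ^ (k - 1)) :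
    (∀ x : ℝ, ((n : ℝ) - 1) / 2 ^ (k - 1) ≤ x → x ≤ (n : ℝ) / 2 ^ (k - 1) →
      ∫ τ in (0 : ℝ)..x,
          (if ((n : ℝ) - 1) / 2 ^ (k - 1) ≤ τ ∧ τ < (n : ℝ) / 2 ^ (k - 1) then
            chebGamma 1 * (2 : ℝ) ^ (((k : ℝ) - 1) / 2) *
              (Polynomial.Chebyshev.T ℝ 1).eval ((2 : ℝ) ^ k * τ - 2 * n + 1)
          else 0)
        = chebGamma 1 * (2 : ℝ) ^ (-((k : ℝ) - 1) / 2 - 3) *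
            ((Polynomial.Chebyshev.T ℝ 2).eval ((2 : ℝ) ^ k * x - 2 * n + 1)
              - (Polynomial.Chebyshev.T ℝ 0).eval ((2 : ℝ) ^ k * x - 2 * n + 1))) ∧
    (∀ x : ℝ, (n : ℝ) / 2 ^ (k - 1) ≤ x → x ≤ 1 →
      ∫ τ in (0 : ℝ)..x,
          (if ((n : ℝ) - 1) / 2 ^ (k - 1) ≤ τ ∧ τ < (n : ℝ) / 2 ^ (k - 1) then
            chebGamma 1 * (2 : ℝ) ^ (((k : ℝ) - 1) / 2) *
              (Polynomial.Chebyshev.T ℝ 1).eval ((2 : ℝ) ^ k * τ - 2 * n + 1)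
          else 0)
        = 0) := by
  have hP0 : (0:ℝ) < 2 ^ (k - 1) := by positivity
  set P : ℝ := 2 ^ (k - 1) with hPdef
  set r : ℝ := (2:ℝ) ^ (((k:ℝ) - 1)/2) with hrdef
  have hr0 : (0:ℝ) < r := Real.rpow_pos_of_pos two_pos _
  have hk1 : ((k:ℝ) - 1) = ((k - 1 : ℕ) : ℝ) := by
    have : (1:ℕ) ≤ k := hk
    push_cast [Nat.cast_sub this]; ring
  have hrr : r * r = P := by
    rw [hrdef, ← Real.rpow_add two_pos]
    norm_num
    rw [hk1, Real.rpow_natCast]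
  have h2k : (2:ℝ)^k = 2 * P := by
    rw [hPdef, ← pow_succ']; congr 1; omega
  have hs : (2:ℝ) ^ (-((k:ℝ) - 1)/2 - 3) = 1/(8*r) := by
    rw [Real.rpow_sub two_pos, show -((k:ℝ)-1)/2 = -(((k:ℝ)-1)/2) by ring,
      Real.rpow_neg (by norm_num), show ((3:ℝ)) = ((3:ℕ):ℝ) by norm_num,
      Real.rpow_natCast, hrdef]
    norm_num; ring
  set A : ℝ := ((n : ℝ) - 1) / P with hAdef
  set B : ℝ := (n : ℝ) / P with hBdef
  have hA0 : 0 ≤ A := by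
    apply div_nonneg _ hP0.le
    have : (1:ℝ) ≤ (n:ℝ) := by exact_mod_cast hn1
    linarith
  have hAB : A ≤ B := by
    rw [hAdef, hBdef, div_le_div_iff₀ hP0 hP0]
    nlinarith [hP0]
  set C : ℝ := chebGamma 1 * r with hCdef
  set g : ℝ → ℝ := fun τ => C * ((2:ℝ)^k * τ - 2 * n + 1) with hgdef
  set f : ℝ → ℝ := fun τ =>
    if A ≤ τ ∧ τ < B then C * (Polynomial.Chebyshev.T ℝ 1).eval ((2 : ℝ) ^ k * τ - 2 * n + 1)
    else 0 with hfdef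
  have hf_ind : ∀ τ, f τ = (Set.Ico A B).indicator g τ := by
    intro τ
    simp only [hfdef, Set.indicator_apply, Set.mem_Ico, hgdef, Polynomial.Chebyshev.T_one,
      Polynomial.eval_X]
  have hgc : Continuous g :=
    continuous_const.mul (((continuous_const.mul continuous_id).sub continuous_const).add
      continuous_const)
  -- a.e. equality with the Ioc indicator
  have hae : f =ᵐ[MeasureTheory.volume] (Set.Ioc A B).indicator g := by
    have hz : MeasureTheory.volume ({A, B} : Set ℝ) = 0 :=
      (Set.Finite.countable (by simp)).measure_zero _
    filter_upwards [MeasureTheory.measure_eq_zero_iff_ae_notMem.mp hz] with τ hτ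
    simp only [Set.mem_insert_iff, Set.mem_singleton_iff, not_or] at hτ
    rw [hf_ind]
    rcases lt_trichotomy τ A with h | h | h
    · rw [Set.indicator_of_notMem (by simp [Set.mem_Ico]; intro; linarith),
        Set.indicator_of_notMem (by simp [Set.mem_Ioc]; intro; linarith)]
    · exact absurd h hτ.1
    · rcases lt_trichotomy τ B with h2 | h2 | h2
      · rw [Set.indicator_of_mem (by simp [Set.mem_Ico]; exact ⟨h.le, h2⟩),
          Set.indicator_of_mem (by simp [Set.mem_Ioc]; exact ⟨h, h2.le⟩)]
      · exact absurd h2 hτ.2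
      · rw [Set.indicator_of_notMem (by simp [Set.mem_Ico]; intro; linarith),
          Set.indicator_of_notMem (by simp [Set.mem_Ioc]; intro; linarith)]
  -- key computation
  have key : ∀ x : ℝ, A ≤ x → x ≤ B →
      (∫ τ in (0:ℝ)..x, f τ) =
        chebGamma 1 * (2:ℝ) ^ (-((k:ℝ) - 1)/2 - 3) *
          ((2 * ((2:ℝ)^k * x - 2 * n + 1)^2 - 1) - 1) := by
    intro x hx1 hx2
    have hx0 : (0:ℝ) ≤ x := le_trans hA0 hx1
    rw [intervalIntegral.integral_congr_ae (by filter_upwards [hae] with τ h _ using h)]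
    rw [intervalIntegral.integral_of_le hx0,
      MeasureTheory.integral_indicator measurableSet_Ioc,
      MeasureTheory.Measure.restrict_restrict measurableSet_Ioc,
      Set.Ioc_inter_Ioc, max_eq_left hA0, min_eq_right hx2,
      ← intervalIntegral.integral_of_le hx1]
    have hstep : (∫ τ in A..x, g τ) = C * (P * (x^2 - A^2) - (2*(n:ℝ) - 1) * (x - A)) := by
      have hF : ∀ τ : ℝ, HasDerivAt (fun t => C*(P*t^2 - (2*(n:ℝ)-1)*t))
          (g τ) τ := by
        intro τ
        have h1 := ((hasDerivAt_pow 2 τ).const_mul P).sub ((hasDerivAt_id τ).const_mul (2*(n:ℝ)-1))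
        have h2 := h1.const_mul C
        refine HasDerivAt.congr_deriv h2 ?_
        simp only [hgdef, h2k, id]
        push_cast
        ring
      rw [intervalIntegral.integral_eq_sub_of_hasDerivAt (fun τ _ => hF τ)
        (hgc.intervalIntegrable _ _)]
      ring
    rw [hstep, hs, hCdef]
    have hPA : P * A = (n:ℝ) - 1 := by
      rw [hAdef]; field_simp
    have main : 8 * P * (P * (x^2 - A^2) - (2*(n:ℝ) - 1) * (x - A)) =
        (2 * (2 * P * x - 2 * (n:ℝ) + 1)^2 - 1) - 1 := by
      linear_combination (8*((n:ℝ) - P*A)) * hPA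
    rw [h2k, ← main]
    rw [← hrr]
    field_simp
  constructor
  · intro x hx1 hx2
    rw [show (∫ τ in (0:ℝ)..x,
          (if ((n : ℝ) - 1) / 2 ^ (k - 1) ≤ τ ∧ τ < (n : ℝ) / 2 ^ (k - 1) then
            chebGamma 1 * (2 : ℝ) ^ (((k : ℝ) - 1) / 2) *
              (Polynomial.Chebyshev.T ℝ 1).eval ((2 : ℝ) ^ k * τ - 2 * n + 1)
          else 0)) = ∫ τ in (0:ℝ)..x, f τ from rfl]
    rw [key x hx1 hx2]
    have hT2 : (Polynomial.Chebyshev.T ℝ 2).eval ((2 : ℝ) ^ k * x - 2 * n + 1) =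
        2 * ((2:ℝ)^k * x - 2*n + 1)^2 - 1 := by
      simp [Polynomial.Chebyshev.T_two]
      try ring
    have hT0 : (Polynomial.Chebyshev.T ℝ 0).eval ((2 : ℝ) ^ k * x - 2 * n + 1) = 1 := by
      simp [Polynomial.Chebyshev.T_zero]
    rw [hT2, hT0]
  · intro x hx1 hx2
    have hfint : ∀ a b : ℝ, IntervalIntegrable f MeasureTheory.volume a b := by
      intro a b
      rw [intervalIntegrable_iff]
      have hg' : IntervalIntegrable g MeasureTheory.volume a b := hgc.intervalIntegrable a b
      rw [intervalIntegrable_iff] at hg'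
      exact (hg'.indicator measurableSet_Ioc).congr
        (MeasureTheory.ae_restrict_of_ae hae.symm)
    have hsplit : (∫ τ in (0:ℝ)..x, f τ) = (∫ τ in (0:ℝ)..B, f τ) + ∫ τ in B..x, f τ :=
      (intervalIntegral.integral_add_adjacent_intervals (hfint 0 B) (hfint B x)).symm
    have h1 : (∫ τ in (0:ℝ)..B, f τ) = 0 := by
      rw [key B hAB le_rfl]
      have : (2:ℝ)^k * B - 2*n + 1 = 1 := by
        rw [hBdef, h2k]; field_simp; ring
      rw [this]; ring
    have h2 : (∫ τ in B..x, f τ) = 0 := by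
      rw [intervalIntegral.integral_congr (g := fun _ => (0:ℝ)) ?_, intervalIntegral.integral_zero]
      intro τ hτ
      rw [Set.uIcc_of_le hx1, Set.mem_Icc] at hτ
      simp only [hfdef]
      rw [if_neg]
      rintro ⟨-, hlt⟩
      linarith [hτ.1]
    rw [hsplit, h1, h2, add_zero]
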